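/- arXiv:2506.14344 — 7 statements merged into one kernel-verified Lean document; each statement's English description precedes it below -/
import Mathlib

section
/- An ultrafilter W on I × J is a tensor product if and only if for every X ∈ W there exists i ∈ I with X_i ∈ π₂(W). -/
/-- Tensor product of ultrafilters: `X ∈ tensor U V ↔ {i | {j | (i,j) ∈ X} ∈ V} ∈ U`. -/
def tensor {I J : Type*} (U : Ultrafilter I) (V : Ultrafilter J) : Ultrafilter (I × J) :=
  U.bind fun i => V.map fun j => (i, j)

theorem mem_tensor {I J : Type*} {U : Ultrafilter I} {V : Ultrafilter J} {X : Set (I × J)} :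
    X ∈ tensor U V ↔ {i : I | {j : J | (i, j) ∈ X} ∈ V} ∈ U := Iff.rfl

theorem stmt_5 {I J : Type*} (W : Ultrafilter (I × J)) :
    (∃ (U : Ultrafilter I) (V : Ultrafilter J), W = tensor U V) ↔
      ∀ X : Set (I × J), X ∈ W →
        ∃ i : I, {j : J | (i, j) ∈ X} ∈ Ultrafilter.map Prod.snd W := by
  constructor
  · rintro ⟨U, V, rfl⟩ X hX
    obtain ⟨i, hi⟩ := Ultrafilter.nonempty_of_mem (mem_tensor.mp hX)
    refine ⟨i, ?_⟩
    rw [Ultrafilter.mem_map, mem_tensor]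
    have : {i' : I | {j : J | (i', j) ∈ Prod.snd ⁻¹' {j : J | (i, j) ∈ X}} ∈ V} = Set.univ := by
      ext i'
      simp only [Set.mem_setOf_eq, Set.mem_preimage, Set.mem_univ, iff_true]
      exact hi
    rw [this]
    exact Filter.univ_mem
  · intro h
    refine ⟨W.map Prod.fst, W.map Prod.snd, ?_⟩
    have key : ∀ X : Set (I × J), X ∈ W → X ∈ tensor (W.map Prod.fst) (W.map Prod.snd) := by
      intro X hX
      rw [mem_tensor, Ultrafilter.mem_map]
      by_contra hc
      rw [← Ultrafilter.compl_mem_iff_notMem] at hc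
      have hA : (Prod.fst ⁻¹' {i : I | {j : J | (i, j) ∈ X} ∈ W.map Prod.snd})ᶜ ∈ W := hc
      obtain ⟨i, hi⟩ := h _ ((W : Filter (I × J)).inter_mem hX hA)
      have hsub : {j : J | (i, j) ∈ X ∩ (Prod.fst ⁻¹' {i : I | {j : J | (i, j) ∈ X} ∈ W.map Prod.snd})ᶜ}
          ⊆ {j : J | (i, j) ∈ X} := fun j hj => hj.1
      have hXi : {j : J | (i, j) ∈ X} ∈ W.map Prod.snd :=
        Filter.mem_of_superset hi hsub
      obtain ⟨j, hj⟩ := Ultrafilter.nonempty_of_mem hi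
      exact hj.2 hXi
    apply Ultrafilter.coe_injective
    ext X
    constructor
    · exact key X
    · intro hX
      by_contra hW
      have hW' : Xᶜ ∈ W := Ultrafilter.compl_mem_iff_notMem.mpr hW
      exact Ultrafilter.compl_notMem_iff.mpr hX (key _ hW')
end

section
/- Let W be an ultrafilter on I × J whose first projection π₁(W) is non-principal. Then W is a tensor product if and only if for every X ⊆ I × J, whenever X_i ∈ π₂(W) for all but finitely many i ∈ I, then X ∈ W. -/
theorem tensor_map_fst {I J : Type*} (U : Ultrafilter I) (V : Ultrafilter J) :
    Ultrafilter.map Prod.fst (tensor U V) = U := by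
  ext s
  rw [Ultrafilter.mem_map, mem_tensor]
  have : {i : I | {j : J | (i, j) ∈ Prod.fst ⁻¹' s} ∈ V} = s := by
    ext i
    by_cases h : i ∈ s
    · simp [h]
      exact Filter.univ_mem
    · simp [h]
  rw [this]

theorem tensor_map_snd {I J : Type*} (U : Ultrafilter I) (V : Ultrafilter J) :
    Ultrafilter.map Prod.snd (tensor U V) = V := by
  ext s
  rw [Ultrafilter.mem_map, mem_tensor]
  by_cases h : s ∈ V
  · simp [h, Set.preimage]
    exact Filter.univ_mem
  · simp [h, Set.preimage]

theorem stmt_6 {I J : Type*} (W : Ultrafilter (I × J))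
    (hnp : ∀ i : I, Ultrafilter.map Prod.fst W ≠ pure i) :
    (∃ (U : Ultrafilter I) (V : Ultrafilter J), W = tensor U V) ↔
      ∀ X : Set (I × J),
        ({i : I | {j : J | (i, j) ∈ X} ∈ Ultrafilter.map Prod.snd W}ᶜ).Finite →
          X ∈ W := by
  constructor
  · rintro ⟨U, V, rfl⟩ X hX
    rw [tensor_map_snd] at hX
    have hcof : (Ultrafilter.map Prod.fst (tensor U V) : Filter I) ≤ Filter.cofinite := by
      rcases (Ultrafilter.map Prod.fst (tensor U V)).le_cofinite_or_eq_pure with h | ⟨i, hi⟩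
      · exact h
      · exact absurd hi (hnp i)
    rw [tensor_map_fst] at hcof
    rw [mem_tensor]
    exact hcof (Filter.mem_cofinite.mpr hX)
  · intro h
    refine ⟨Ultrafilter.map Prod.fst W, Ultrafilter.map Prod.snd W, ?_⟩
    set U := Ultrafilter.map Prod.fst W with hU
    set V := Ultrafilter.map Prod.snd W with hV
    ext X
    rw [mem_tensor]
    set A := {i : I | {j : J | (i, j) ∈ X} ∈ V} with hA
    constructor
    · intro hXW
      by_contra hAU
      have hAc : Aᶜ ∈ U := Ultrafilter.compl_mem_iff_notMem.mpr hAU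
      have hZ : Xᶜ ∪ Prod.fst ⁻¹' A ∈ W := by
        apply h
        have : {i : I | {j : J | (i, j) ∈ Xᶜ ∪ Prod.fst ⁻¹' A} ∈ V}ᶜ = ∅ := by
          ext i
          simp only [Set.mem_compl_iff, Set.mem_setOf_eq, Set.mem_empty_iff_false,
            iff_false, not_not, Set.mem_union, Set.mem_preimage]
          by_cases hi : i ∈ A
          · simp [hi]
            exact Filter.univ_mem
          · have hXc : {j : J | (i, j) ∈ X}ᶜ ∈ V :=
              Ultrafilter.compl_mem_iff_notMem.mpr hi
            exact Filter.mem_of_superset hXc (fun j hj => Or.inl hj)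
        rw [this]; exact Set.finite_empty
      have hAcW : Prod.fst ⁻¹' Aᶜ ∈ W := hAc
      have : Xᶜ ∈ W := by
        refine Filter.mem_of_superset (Filter.inter_mem hZ hAcW) ?_
        rintro ⟨i, j⟩ ⟨hz, hac⟩
        rcases hz with hx | ha
        · exact hx
        · exact absurd ha hac
      exact (Ultrafilter.compl_mem_iff_notMem.mp this) hXW
    · intro hAU
      have hY : X ∪ Prod.fst ⁻¹' Aᶜ ∈ W := by
        apply h
        have : {i : I | {j : J | (i, j) ∈ X ∪ Prod.fst ⁻¹' Aᶜ} ∈ V}ᶜ = ∅ := by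
          ext i
          simp only [Set.mem_compl_iff, Set.mem_setOf_eq, Set.mem_empty_iff_false,
            iff_false, not_not, Set.mem_union, Set.mem_preimage]
          by_cases hi : i ∈ A
          · exact Filter.mem_of_superset hi (fun j hj => Or.inl hj)
          · simp [hi]
            exact Filter.univ_mem
        rw [this]; exact Set.finite_empty
      have hAW : Prod.fst ⁻¹' A ∈ W := hAU
      refine Filter.mem_of_superset (Filter.inter_mem hY hAW) ?_
      rintro ⟨i, j⟩ ⟨hy, ha⟩
      rcases hy with hx | hac
      · exact hx
      · exact absurd ha hac
end

section
/- Let U be a non-principal ultrafilter on ℕ and X ∈ U ⊗ U. Then there exists a strictly increasing sequence h₁ < h₂ < … in ℕ such that (h_i, h_j) ∈ X for all i < j. -/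
theorem stmt_12 (U : Ultrafilter ℕ) (hU : ∀ n : ℕ, U ≠ pure n)
    (X : Set (ℕ × ℕ)) (hX : X ∈ tensor U U) :
    ∃ h : ℕ → ℕ, StrictMono h ∧ ∀ i j : ℕ, i < j → (h i, h j) ∈ X := by
  classical
  set A : Set ℕ := {i | {j | (i, j) ∈ X} ∈ U} with hA
  have hAU : A ∈ U := hX
  have hcof : ∀ s : Set ℕ, s.Finite → sᶜ ∈ U := by
    intro s hs
    by_contra hc
    rw [Ultrafilter.compl_mem_iff_notMem, not_not] at hc
    obtain ⟨a, -, ha⟩ := Ultrafilter.eq_pure_of_finite_mem hs hc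
    exact hU a ha
  have key : ∀ s : Finset ℕ, (∀ x ∈ s, x ∈ A) →
      ∃ y, y ∈ A ∧ ∀ x ∈ s, x < y ∧ (x, y) ∈ X := by
    intro s hs
    have hT : A ∩ ⋂ x ∈ s, ({j | (x, j) ∈ X} ∩ Set.Ioi x) ∈ U := by
      refine Filter.inter_mem hAU ?_
      refine (Filter.biInter_finset_mem s).mpr ?_
      intro x hx
      refine Filter.inter_mem (hs x hx) ?_
      have := hcof (Set.Iic x) (Set.finite_Iic x)
      simpa [Set.compl_Iic] using this
    obtain ⟨y, hyA, hy⟩ := Ultrafilter.nonempty_of_mem hT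
    simp only [Set.mem_iInter, Set.mem_inter_iff, Set.mem_setOf_eq, Set.mem_Ioi] at hy
    exact ⟨y, hyA, fun x hx => ⟨(hy x hx).2, (hy x hx).1⟩⟩
  let next : Finset ℕ → ℕ := fun s =>
    if h : ∃ y, y ∈ A ∧ ∀ x ∈ s, x < y ∧ (x, y) ∈ X then h.choose else 0
  have next_spec : ∀ s : Finset ℕ, (∀ x ∈ s, x ∈ A) →
      next s ∈ A ∧ ∀ x ∈ s, x < next s ∧ (x, next s) ∈ X := by
    intro s hs
    have h := key s hs
    simp only [next, dif_pos h]
    exact h.choose_spec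
  let st : ℕ → Finset ℕ := fun n => Nat.rec ∅ (fun _ s => insert (next s) s) n
  let h : ℕ → ℕ := fun n => next (st n)
  have hst_succ : ∀ n, st (n + 1) = insert (h n) (st n) := fun n => rfl
  have hInv : ∀ n, ∀ x ∈ st n, x ∈ A := by
    intro n
    induction n with
    | zero => simp [st]
    | succ n ih =>
      rw [hst_succ]
      intro x hx
      rcases Finset.mem_insert.mp hx with h1 | h1
      · subst h1; exact (next_spec _ ih).1
      · exact ih x h1
  have hmem : ∀ i n, i < n → h i ∈ st n := by
    intro i n hin
    induction n with
    | zero => omega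
    | succ n ih =>
      rw [hst_succ]
      rcases Nat.lt_succ_iff_lt_or_eq.mp hin with h1 | h1
      · exact Finset.mem_insert_of_mem (ih h1)
      · subst h1; exact Finset.mem_insert_self _ _
  have main : ∀ i j, i < j → h i < h j ∧ (h i, h j) ∈ X := by
    intro i j hij
    exact (next_spec (st j) (hInv j)).2 (h i) (hmem i j hij)
  exact ⟨h, fun i j hij => (main i j hij).1, fun i j hij => (main i j hij).2⟩
end

section
/- Ramsey's theorem for pairs via ultrafilters: for every finite coloring of the set of pairs {(n,m) ∈ ℕ × ℕ : n < m} into r colors, there exists an infinite set H ⊆ ℕ such that all pairs (h, h') with h < h' both in H have the same color. -/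
open Filter Set

theorem stmt_14 (r : ℕ) (c : ℕ × ℕ → Fin r) :
    ∃ H : Set ℕ, H.Infinite ∧ ∃ k : Fin r,
      ∀ a ∈ H, ∀ b ∈ H, a < b → c (a, b) = k := by
  classical
  set U : Ultrafilter ℕ := Filter.hyperfilter ℕ with hUdef
  have hinf : ∀ s : Set ℕ, s ∈ U → s.Infinite := by
    intro s hs
    by_contra hfin
    rw [Set.not_infinite] at hfin
    exact Filter.notMem_hyperfilter_of_finite hfin hs
  have hpick : ∀ f : ℕ → Fin r, ∃ k, {m | f m = k} ∈ U := by
    intro f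
    by_contra h
    push_neg at h
    have h2 : ∀ k, {m | f m = k}ᶜ ∈ U := fun k =>
      Ultrafilter.compl_mem_iff_notMem.mpr (h k)
    have h3 : (⋂ k, {m | f m = k}ᶜ) ∈ U := Filter.iInter_mem.mpr h2
    obtain ⟨m, hm⟩ := (hinf _ h3).nonempty
    simp only [Set.mem_iInter, Set.mem_compl_iff, Set.mem_setOf_eq] at hm
    exact hm (f m) rfl
  choose kfun hkfun using fun n => hpick (fun m => c (n, m))
  obtain ⟨K, hK⟩ := hpick kfun
  have ext0 : ∀ s : Finset ℕ, (∀ a ∈ s, kfun a = K) →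
      ∃ m, kfun m = K ∧ (∀ a ∈ s, a < m) ∧ ∀ a ∈ s, c (a, m) = K := by
    intro s hs
    have h1 : {m | kfun m = K} ∈ U := hK
    have h2 : {m | ∀ a ∈ s, a < m} ∈ U := by
      have hsub : Set.Ioi (s.sup id) ⊆ {m | ∀ a ∈ s, a < m} := by
        intro m hm a ha
        exact lt_of_le_of_lt (Finset.le_sup (f := id) ha) hm
      exact Filter.mem_of_superset
        (Filter.mem_hyperfilter_of_finite_compl
          (by rw [Set.compl_Ioi]; exact Set.finite_Iic _)) hsub
    have h3 : (⋂ a ∈ s, {m | c (a, m) = K}) ∈ U := by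
      exact (Filter.biInter_finset_mem s).mpr (fun a ha => by
        have := hkfun a; rwa [hs a ha] at this)
    have h4 := Filter.inter_mem h1 (Filter.inter_mem h2 h3)
    obtain ⟨m, hm1, hm2, hm3⟩ := (hinf _ h4).nonempty
    refine ⟨m, hm1, hm2, fun a ha => ?_⟩
    have := Set.mem_iInter₂.mp hm3 a ha
    exact this
  set Good : Finset ℕ → Prop :=
    fun s => (∀ a ∈ s, kfun a = K) ∧ ∀ a ∈ s, ∀ b ∈ s, a < b → c (a, b) = K with hGood
  have step : ∀ s : Finset ℕ, Good s → ∃ m, m ∉ s ∧ Good (insert m s) := by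
    intro s hs
    obtain ⟨m, hm1, hm2, hm3⟩ := ext0 s hs.1
    refine ⟨m, fun hmem => lt_irrefl m (hm2 m hmem), ?_, ?_⟩
    · intro a ha
      rcases Finset.mem_insert.mp ha with rfl | ha
      · exact hm1
      · exact hs.1 a ha
    · intro a ha b hb hab
      rcases Finset.mem_insert.mp hb with hb' | hb'
      · rcases Finset.mem_insert.mp ha with ha' | ha'
        · exact absurd hab (by rw [ha', hb']; exact lt_irrefl m)
        · rw [hb']; exact hm3 a ha'
      · rcases Finset.mem_insert.mp ha with ha' | ha'
        · exact absurd hab (by rw [ha']; exact not_lt.mpr (le_of_lt (hm2 b hb')))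
        · exact hs.2 a ha' b hb' hab
  let pick : {s : Finset ℕ // Good s} → {s : Finset ℕ // Good s} := fun s =>
    ⟨insert (Classical.choose (step s.1 s.2)) s.1,
      (Classical.choose_spec (step s.1 s.2)).2⟩
  have hGood0 : Good ∅ := ⟨fun a ha => absurd ha (Finset.notMem_empty a),
    fun a ha => absurd ha (Finset.notMem_empty a)⟩
  let g : ℕ → {s : Finset ℕ // Good s} := fun n => pick^[n] ⟨∅, hGood0⟩
  have hg_succ : ∀ n, g (n + 1) = pick (g n) := by
    intro n
    simp only [g, Function.iterate_succ_apply']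
  have hg_card : ∀ n, (g n).1.card = n := by
    intro n
    induction n with
    | zero => simp [g]
    | succ n ih =>
      rw [hg_succ n]
      have hnot := (Classical.choose_spec (step (g n).1 (g n).2)).1
      simp only [pick]
      rw [Finset.card_insert_of_notMem hnot, ih]
  have hg_mono : ∀ m n, m ≤ n → (g m).1 ⊆ (g n).1 := by
    intro m n hmn
    induction n with
    | zero => rw [Nat.le_zero.mp hmn]
    | succ n ih =>
      rcases Nat.lt_or_ge m (n + 1) with h | h
      · have := ih (Nat.lt_succ_iff.mp h)
        refine this.trans ?_
        rw [hg_succ n]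
        exact Finset.subset_insert _ _
      · rw [le_antisymm hmn h]
  refine ⟨{x | ∃ n, x ∈ (g n).1}, ?_, K, ?_⟩
  · intro hfin
    have hsub : ∀ n, (g n).1 ⊆ hfin.toFinset := by
      intro n x hx
      rw [Set.Finite.mem_toFinset]
      exact ⟨n, hx⟩
    have := Finset.card_le_card (hsub (hfin.toFinset.card + 1))
    rw [hg_card] at this
    omega
  · rintro a ⟨n, ha⟩ b ⟨m, hb⟩ hab
    have ha' : a ∈ (g (max n m)).1 := hg_mono n _ (le_max_left _ _) ha
    have hb' : b ∈ (g (max n m)).1 := hg_mono m _ (le_max_right _ _) hb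
    exact (g (max n m)).2.2 a ha' b hb' hab
end

section
/- Let (a_{n,m}) be a double-indexed bounded real sequence such that ℓ_n := lim_{m→∞} a_{n,m} exists for every n, and let ℓ ∈ ℝ. Then lim_{n→∞} ℓ_n = ℓ if and only if for all non-principal ultrafilters U and V on ℕ, the limit of a_{n,m} along the tensor product U ⊗ V equals ℓ. -/
theorem nonpure_le_cofinite {U : Ultrafilter ℕ} (hU : ∀ n : ℕ, U ≠ pure n) :
    (U : Filter ℕ) ≤ Filter.cofinite := by
  rcases U.le_cofinite_or_eq_pure with h | ⟨n, rfl⟩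
  · exact h
  · exact absurd rfl (hU n)

theorem stmt_17 (a : ℕ → ℕ → ℝ) (l : ℕ → ℝ) (ℓ : ℝ)
    (hbd : ∃ M : ℝ, ∀ n m, |a n m| ≤ M)
    (hl : ∀ n : ℕ, Filter.Tendsto (a n) Filter.atTop (nhds (l n))) :
    Filter.Tendsto l Filter.atTop (nhds ℓ) ↔
      ∀ U V : Ultrafilter ℕ, (∀ n : ℕ, U ≠ pure n) → (∀ n : ℕ, V ≠ pure n) →
        ∀ ε : ℝ, 0 < ε → {p : ℕ × ℕ | |a p.1 p.2 - ℓ| < ε} ∈ tensor U V := by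
  constructor
  · intro h U V hU hV ε hε
    have hUc := nonpure_le_cofinite hU
    have hVc := nonpure_le_cofinite hV
    rw [mem_tensor]
    have hrate : ∀ᶠ n in Filter.atTop, |l n - ℓ| < ε / 2 := by
      have := (Metric.tendsto_atTop.mp h) (ε / 2) (by linarith)
      filter_upwards [Filter.eventually_atTop.mpr this] with n hn
      simpa [Real.dist_eq] using hn
    have key : ∀ n : ℕ, |l n - ℓ| < ε / 2 → {m : ℕ | |a n m - ℓ| < ε} ∈ V := by
      intro n hn
      have h1 : ∀ᶠ m in Filter.atTop, |a n m - l n| < ε / 2 := by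
        have := (Metric.tendsto_atTop.mp (hl n)) (ε / 2) (by linarith)
        filter_upwards [Filter.eventually_atTop.mpr this] with m hm
        simpa [Real.dist_eq] using hm
      have h2 : ∀ᶠ m in Filter.atTop, |a n m - ℓ| < ε := by
        filter_upwards [h1] with m hm
        calc |a n m - ℓ| ≤ |a n m - l n| + |l n - ℓ| := abs_sub_le _ _ _
          _ < ε / 2 + ε / 2 := by linarith
          _ = ε := by ring
      rw [← Nat.cofinite_eq_atTop] at h2
      exact hVc h2
    have hmem : ∀ᶠ n in Filter.atTop, {m : ℕ | |a n m - ℓ| < ε} ∈ V := by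
      filter_upwards [hrate] with n hn using key n hn
    rw [← Nat.cofinite_eq_atTop] at hmem
    exact hUc hmem
  · intro h
    by_contra hnot
    rw [Metric.tendsto_atTop] at hnot
    push_neg at hnot
    obtain ⟨ε, hε, hfreq⟩ := hnot
    set S : Set ℕ := {n | ε ≤ |l n - ℓ|} with hS
    have hfreqS : ∃ᶠ n in Filter.atTop, n ∈ S := by
      rw [Filter.frequently_atTop]
      intro N
      obtain ⟨n, hnN, hn⟩ := hfreq N
      exact ⟨n, hnN, by simpa [hS, Real.dist_eq] using hn⟩
    rw [← Nat.cofinite_eq_atTop, Filter.frequently_iff_neBot] at hfreqS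
    haveI : (Filter.cofinite ⊓ Filter.principal S).NeBot := by simpa using hfreqS
    obtain ⟨U, hUle⟩ := Ultrafilter.exists_le (Filter.cofinite ⊓ Filter.principal S)
    have hUc : (U : Filter ℕ) ≤ Filter.cofinite := hUle.trans inf_le_left
    have hUnp : ∀ n : ℕ, U ≠ pure n := by
      intro n hn
      have h1 : ({n}ᶜ : Set ℕ) ∈ U := hUc ((Set.finite_singleton n).compl_mem_cofinite)
      rw [hn] at h1
      simp at h1
    set V := Filter.hyperfilter ℕ with hV
    have hVc : (V : Filter ℕ) ≤ Filter.cofinite := Filter.hyperfilter_le_cofinite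
    have hVnp : ∀ n : ℕ, V ≠ pure n := by
      intro n hn
      have h1 : ({n}ᶜ : Set ℕ) ∈ V := hVc ((Set.finite_singleton n).compl_mem_cofinite)
      rw [hn] at h1
      simp at h1
    have hX := h U V hUnp hVnp (ε / 2) (by linarith)
    rw [mem_tensor] at hX
    have hSU : S ∈ U := hUle.trans inf_le_right (Filter.mem_principal_self S)
    obtain ⟨n, hnA, hnS⟩ := Filter.nonempty_of_mem (U.inter_mem hX hSU)
    -- hnA : {m | |a n m - ℓ| < ε/2} ∈ V
    set T : Set ℕ := {m | |a n m - ℓ| < ε / 2} with hT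
    have hTinf : T.Infinite := by
      intro hfin
      have : Tᶜ ∈ V := hVc hfin.compl_mem_cofinite
      have h0 : (∅ : Set ℕ) ∈ (V : Filter ℕ) := by
        rw [← Set.inter_compl_self T]; exact V.inter_mem hnA this
      exact Filter.empty_notMem _ h0
    have hfreqT : ∃ᶠ m in Filter.atTop, m ∈ T := by
      rw [← Nat.cofinite_eq_atTop, Filter.frequently_cofinite_iff_infinite]
      exact hTinf
    have hle : |l n - ℓ| ≤ ε / 2 := by
      by_contra hlt
      push_neg at hlt
      have htend : Filter.Tendsto (fun m => |a n m - ℓ|) Filter.atTop (nhds |l n - ℓ|) :=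
        ((hl n).sub_const ℓ).abs
      have hev : ∀ᶠ m in Filter.atTop, ε / 2 < |a n m - ℓ| :=
        htend.eventually (eventually_gt_nhds hlt)
      obtain ⟨m, hm1, hm2⟩ := (hfreqT.and_eventually hev).exists
      exact absurd hm1 (not_lt.mpr hm2.le)
    have : ε ≤ |l n - ℓ| := hnS
    linarith
end

section
/- Consider the associative operation ⋆ on I × J defined by (a,b) ⋆ (c,d) = (a,d), and its canonical extension to ultrafilters on I × J given by X ∈ V ⊛ W iff {(a,b) : {(c,d) : (a,d) ∈ X} ∈ W} ∈ V. Then for all ultrafilters V, W on I × J, V ⊛ W = π₁(V) ⊗ π₂(W). Consequently, an ultrafilter V on I × J is a tensor product if and only if V ⊛ V = V. -/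
/-- The canonical extension to ultrafilters of the operation (a,b) ⋆ (c,d) = (a,d):
X ∈ starOp V W ↔ {p | {q | (p.1, q.2) ∈ X} ∈ W} ∈ V. -/
def starOp {I J : Type*} (V W : Ultrafilter (I × J)) : Ultrafilter (I × J) :=
  V.bind fun p => W.map fun q => (p.1, q.2)

theorem map_fst_tensor {I J : Type*} (U : Ultrafilter I) (U' : Ultrafilter J) :
    Ultrafilter.map Prod.fst (tensor U U') = U := by
  ext X
  simp only [Ultrafilter.mem_map, mem_tensor]
  constructor
  · intro h
    refine U.mem_of_superset h ?_
    intro i hi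
    simp only [Set.mem_setOf_eq, Set.mem_preimage] at hi
    by_contra hx
    simp only [hx, Set.setOf_false] at hi
    exact Ultrafilter.empty_notMem hi
  · intro h
    refine U.mem_of_superset h ?_
    intro i hi
    simp only [Set.mem_setOf_eq, Set.mem_preimage]
    rw [show {j : J | i ∈ X} = Set.univ by simp [hi]]
    exact Filter.univ_mem

theorem map_snd_tensor {I J : Type*} (U : Ultrafilter I) (U' : Ultrafilter J) :
    Ultrafilter.map Prod.snd (tensor U U') = U' := by
  ext X
  simp only [Ultrafilter.mem_map, mem_tensor]
  constructor
  · intro h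
    obtain ⟨i, hi⟩ := U.nonempty_of_mem h
    exact U'.mem_of_superset hi (fun j hj => hj)
  · intro h
    refine U.mem_of_superset Filter.univ_mem ?_
    intro i _
    exact U'.mem_of_superset h (fun j hj => hj)

theorem stmt_18 {I J : Type*} :
    (∀ V W : Ultrafilter (I × J),
      starOp V W = tensor (Ultrafilter.map Prod.fst V) (Ultrafilter.map Prod.snd W)) ∧
    (∀ V : Ultrafilter (I × J),
      (∃ (U : Ultrafilter I) (U' : Ultrafilter J), V = tensor U U') ↔ starOp V V = V) := by
  have h1 : ∀ V W : Ultrafilter (I × J),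
      starOp V W = tensor (Ultrafilter.map Prod.fst V) (Ultrafilter.map Prod.snd W) := by
    intro V W; ext X; rfl
  refine ⟨h1, fun V => ⟨?_, ?_⟩⟩
  · rintro ⟨U, U', rfl⟩
    rw [h1, map_fst_tensor, map_snd_tensor]
  · intro h
    exact ⟨_, _, by rw [← h, h1]⟩
end

section
/- Let A ⊆ ℕ. There exist disjoint infinite sets B, C ⊆ ℕ with B + C ⊆ A if and only if there exist distinct non-principal ultrafilters U, V on ℕ with A ∈ (U ⊕ V) ∩ (V ⊕ U). -/
/-- Pseudo-sum of ultrafilters on ℕ: the image of the tensor product under addition. -/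
def oplus (U V : Ultrafilter ℕ) : Ultrafilter ℕ :=
  Ultrafilter.map (fun p : ℕ × ℕ => p.1 + p.2) (tensor U V)

open Filter Set

lemma mem_oplus {U V : Ultrafilter ℕ} {A : Set ℕ} :
    A ∈ oplus U V ↔ {i : ℕ | {j : ℕ | i + j ∈ A} ∈ V} ∈ U := Iff.rfl

lemma np_le_atTop {U : Ultrafilter ℕ} (h : ∀ n : ℕ, U ≠ pure n) :
    (U : Filter ℕ) ≤ atTop := by
  rcases U.le_cofinite_or_eq_pure with h' | ⟨a, ha⟩
  · rwa [Nat.cofinite_eq_atTop] at h'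
  · exact absurd ha (h a)

lemma list_inter_mem {F : Filter ℕ} (p : ℕ → ℕ → Prop) (l : List ℕ)
    (h : ∀ y ∈ l, ∀ᶠ n in F, p y n) : ∀ᶠ n in F, ∀ y ∈ l, p y n := by
  induction l with
  | nil => simp
  | cons a t ih =>
    have ha := h a List.mem_cons_self
    have ht := ih (fun y hy => h y (List.mem_cons_of_mem a hy))
    filter_upwards [ha, ht] with n h1 h2 y hy
    rcases List.mem_cons.1 hy with rfl | hy
    · exact h1
    · exact h2 y hy

lemma exists_pair (A : Set ℕ) (U V : Ultrafilter ℕ)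
    (hUa : (U : Filter ℕ) ≤ atTop) (hVa : (V : Filter ℕ) ≤ atTop)
    (S1 S2 : Set ℕ) (hS1U : S1 ∈ (U : Filter ℕ)) (hS2V : S2 ∈ (V : Filter ℕ))
    (hS1 : ∀ n ∈ S1, {m : ℕ | n + m ∈ A} ∈ (V : Filter ℕ))
    (hS2 : ∀ n ∈ S2, {m : ℕ | n + m ∈ A} ∈ (U : Filter ℕ))
    (lb lc : List ℕ) :
    ∃ b c : ℕ, (∀ x ∈ lb, x ∈ S1) → (∀ y ∈ lc, y ∈ S2) →
      (b ∈ S1 ∧ c ∈ S2 ∧ b + c ∈ A ∧ (∀ y ∈ lc, b + y ∈ A) ∧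
        (∀ x ∈ lb, x + c ∈ A) ∧ (∀ x ∈ lb, x < b) ∧ (∀ y ∈ lc, y < b) ∧ b < c) := by
  by_cases hlb : ∀ x ∈ lb, x ∈ S1
  · by_cases hlc : ∀ y ∈ lc, y ∈ S2
    · -- choose b
      have e1 : ∀ᶠ n in (U : Filter ℕ), n ∈ S1 := hS1U
      have e2 : ∀ᶠ n in (U : Filter ℕ), ∀ y ∈ lc, n + y ∈ A := by
        refine list_inter_mem _ lc fun y hy => ?_
        have h' : {m : ℕ | y + m ∈ A} ∈ (U : Filter ℕ) := hS2 y (hlc y hy)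
        refine Filter.mem_of_superset h' fun n hn => ?_
        simpa [Nat.add_comm] using hn
      have e3 : ∀ᶠ n in (U : Filter ℕ), ∀ x ∈ lb, x < n :=
        list_inter_mem _ lb fun x _ => hUa (eventually_gt_atTop x)
      have e4 : ∀ᶠ n in (U : Filter ℕ), ∀ y ∈ lc, y < n :=
        list_inter_mem _ lc fun y _ => hUa (eventually_gt_atTop y)
      obtain ⟨b, hb1, hb2, hb3, hb4⟩ :=
        Filter.nonempty_of_mem ((e1.and (e2.and (e3.and e4))) :
          ∀ᶠ n in (U : Filter ℕ), _ )
      -- choose c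
      have f1 : ∀ᶠ m in (V : Filter ℕ), m ∈ S2 := hS2V
      have f2 : ∀ᶠ m in (V : Filter ℕ), b + m ∈ A := hS1 b hb1
      have f3 : ∀ᶠ m in (V : Filter ℕ), ∀ x ∈ lb, x + m ∈ A :=
        list_inter_mem _ lb fun x hx => hS1 x (hlb x hx)
      have f4 : ∀ᶠ m in (V : Filter ℕ), b < m := hVa (eventually_gt_atTop b)
      obtain ⟨c, hc1, hc2, hc3, hc4⟩ :=
        Filter.nonempty_of_mem ((f1.and (f2.and (f3.and f4))) :
          ∀ᶠ m in (V : Filter ℕ), _ )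
      exact ⟨b, c, fun _ _ => ⟨hb1, hc1, hc2, hb2, hc3, hb3, hb4, hc4⟩⟩
    · exact ⟨0, 0, fun _ h2 => absurd h2 hlc⟩
  · exact ⟨0, 0, fun h1 _ => absurd h1 hlb⟩

theorem stmt_19 (A : Set ℕ) :
    (∃ B C : Set ℕ, B.Infinite ∧ C.Infinite ∧ Disjoint B C ∧
        ∀ b ∈ B, ∀ c ∈ C, b + c ∈ A) ↔
      ∃ U V : Ultrafilter ℕ, U ≠ V ∧ (∀ n : ℕ, U ≠ pure n) ∧ (∀ n : ℕ, V ≠ pure n) ∧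
        A ∈ oplus U V ∧ A ∈ oplus V U := by
  constructor
  · rintro ⟨B, C, hB, hC, hBC, hsum⟩
    have hBne : NeBot (cofinite ⊓ 𝓟 B) := hB.cofinite_inf_principal_neBot
    have hCne : NeBot (cofinite ⊓ 𝓟 C) := hC.cofinite_inf_principal_neBot
    set U := Ultrafilter.of (cofinite ⊓ 𝓟 B) with hUdef
    set V := Ultrafilter.of (cofinite ⊓ 𝓟 C) with hVdef
    have hUle : (U : Filter ℕ) ≤ cofinite ⊓ 𝓟 B := Ultrafilter.of_le _
    have hVle : (V : Filter ℕ) ≤ cofinite ⊓ 𝓟 C := Ultrafilter.of_le _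
    have hBU : B ∈ U := hUle (mem_inf_of_right (mem_principal_self B))
    have hCV : C ∈ V := hVle (mem_inf_of_right (mem_principal_self C))
    have hUcof : (U : Filter ℕ) ≤ cofinite := hUle.trans inf_le_left
    have hVcof : (V : Filter ℕ) ≤ cofinite := hVle.trans inf_le_left
    have npU : ∀ n : ℕ, U ≠ pure n := by
      intro n h
      have h1 : ({n}ᶜ : Set ℕ) ∈ U := hUcof ((Set.finite_singleton n).compl_mem_cofinite)
      rw [h, Ultrafilter.mem_pure] at h1
      exact h1 rfl
    have npV : ∀ n : ℕ, V ≠ pure n := by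
      intro n h
      have h1 : ({n}ᶜ : Set ℕ) ∈ V := hVcof ((Set.finite_singleton n).compl_mem_cofinite)
      rw [h, Ultrafilter.mem_pure] at h1
      exact h1 rfl
    have hUV : U ≠ V := by
      intro h
      have hBV : B ∈ V := h ▸ hBU
      obtain ⟨x, hx1, hx2⟩ := Filter.nonempty_of_mem (Filter.inter_mem hBV hCV)
      exact Set.disjoint_left.1 hBC hx1 hx2
    refine ⟨U, V, hUV, npU, npV, ?_, ?_⟩
    · rw [mem_oplus]
      refine Filter.mem_of_superset hBU fun b hb => ?_
      exact Filter.mem_of_superset hCV fun c hc => hsum b hb c hc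
    · rw [mem_oplus]
      refine Filter.mem_of_superset hCV fun c hc => ?_
      refine Filter.mem_of_superset hBU fun b hb => ?_
      show c + b ∈ A
      rw [Nat.add_comm]
      exact hsum b hb c hc
  · rintro ⟨U, V, hUV, hU, hV, hAUV, hAVU⟩
    have hUa := np_le_atTop hU
    have hVa := np_le_atTop hV
    obtain ⟨D, hDU, hDV⟩ : ∃ D : Set ℕ, D ∈ U ∧ Dᶜ ∈ V := by
      by_contra h
      push_neg at h
      have hle : (V : Filter ℕ) ≤ (U : Filter ℕ) := by
        rw [Filter.le_def]
        intro s hs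
        exact Ultrafilter.compl_notMem_iff.1 (h s hs)
      exact hUV (Ultrafilter.coe_le_coe.1 hle).symm
    set S1 : Set ℕ := {n | {m : ℕ | n + m ∈ A} ∈ V} ∩ D with hS1def
    set S2 : Set ℕ := {n | {m : ℕ | n + m ∈ A} ∈ U} ∩ Dᶜ with hS2def
    have hS1U : S1 ∈ (U : Filter ℕ) := Filter.inter_mem (mem_oplus.1 hAUV) hDU
    have hS2V : S2 ∈ (V : Filter ℕ) := Filter.inter_mem (mem_oplus.1 hAVU) hDV
    have hex := fun lb lc => exists_pair A U V hUa hVa S1 S2 hS1U hS2V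
      (fun n hn => hn.1) (fun n hn => hn.1) lb lc
    choose fb fc hf using hex
    set step : List ℕ × List ℕ → List ℕ × List ℕ :=
      fun p => (p.1 ++ [fb p.1 p.2], p.2 ++ [fc p.1 p.2]) with hstepdef
    set st : ℕ → List ℕ × List ℕ := fun k => step^[k] ([], []) with hstdef
    have hsucc : ∀ k, st (k + 1) = step (st k) := fun k =>
      Function.iterate_succ_apply' step k _
    set bs : ℕ → ℕ := fun k => fb (st k).1 (st k).2 with hbsdef
    set cs : ℕ → ℕ := fun k => fc (st k).1 (st k).2 with hcsdef
    have inv : ∀ k, (∀ x ∈ (st k).1, x ∈ S1) ∧ (∀ y ∈ (st k).2, y ∈ S2) := by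
      intro k
      induction k with
      | zero => simp [hstdef]
      | succ k ih =>
        have hk := hf (st k).1 (st k).2 ih.1 ih.2
        rw [hsucc k]
        constructor
        · intro x hx
          rcases List.mem_append.1 hx with hx | hx
          · exact ih.1 x hx
          · rw [List.mem_singleton] at hx
            exact hx ▸ hk.1
        · intro y hy
          rcases List.mem_append.1 hy with hy | hy
          · exact ih.2 y hy
          · rw [List.mem_singleton] at hy
            exact hy ▸ hk.2.1
    have spec : ∀ k, bs k ∈ S1 ∧ cs k ∈ S2 ∧ bs k + cs k ∈ A ∧
        (∀ y ∈ (st k).2, bs k + y ∈ A) ∧ (∀ x ∈ (st k).1, x + cs k ∈ A) ∧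
        (∀ x ∈ (st k).1, x < bs k) ∧ (∀ y ∈ (st k).2, y < bs k) ∧ bs k < cs k :=
      fun k => hf (st k).1 (st k).2 (inv k).1 (inv k).2
    have mem_lists : ∀ j k, j < k → bs j ∈ (st k).1 ∧ cs j ∈ (st k).2 := by
      intro j k
      induction k with
      | zero => omega
      | succ k ih =>
        intro hjk
        rw [hsucc k]
        rcases Nat.lt_succ_iff_lt_or_eq.1 hjk with h | rfl
        · obtain ⟨h1, h2⟩ := ih h
          exact ⟨List.mem_append_left _ h1, List.mem_append_left _ h2⟩
        · exact ⟨List.mem_append_right _ (List.mem_singleton.2 rfl),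
            List.mem_append_right _ (List.mem_singleton.2 rfl)⟩
    have hbmono : StrictMono bs := strictMono_nat_of_lt_succ fun k =>
      (spec (k + 1)).2.2.2.2.2.1 (bs k) (mem_lists k (k + 1) (Nat.lt_succ_self k)).1
    have hcmono : StrictMono cs := strictMono_nat_of_lt_succ fun k =>
      lt_trans ((spec (k + 1)).2.2.2.2.2.2.1 (cs k) (mem_lists k (k + 1) (Nat.lt_succ_self k)).2)
        (spec (k + 1)).2.2.2.2.2.2.2
    refine ⟨Set.range bs, Set.range cs, Set.infinite_range_of_injective hbmono.injective,
      Set.infinite_range_of_injective hcmono.injective, ?_, ?_⟩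
    · rw [Set.disjoint_left]
      rintro x ⟨j, rfl⟩ ⟨k, hk⟩
      have h1 : bs j ∈ D := (spec j).1.2
      have h2 : bs j ∈ Dᶜ := hk ▸ (spec k).2.1.2
      exact h2 h1
    · rintro b ⟨j, rfl⟩ c ⟨k, rfl⟩
      rcases lt_trichotomy j k with h | rfl | h
      · exact (spec k).2.2.2.2.1 (bs j) (mem_lists j k h).1
      · exact (spec j).2.2.1
      · exact (spec j).2.2.2.1 (cs k) (mem_lists k j h).2
end
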